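/- Under the same hypotheses, the disagreement state x^dis(t) = Σ_{i=2}^n uᵢ (vᵢᵀ x(t)) satisfies ‖x^dis(t)‖ ≤ C e^{−(t/τ) λ₂} ‖x₀‖ for some constant C > 0 independent of t and x₀; in particular x^dis(t) → 0 exponentially with rate governed by the smallest nonzero eigenvalue λ₂. -/

import Mathlib

open Matrix Filter

attribute [local instance] Matrix.linftyOpNormedRing Matrix.linftyOpNormedAlgebra

lemma vecMul_smul_matrix {m : ℕ} (w : Fin m → ℝ) (c : ℝ)
    (B : Matrix (Fin m) (Fin m) ℝ) : w ᵥ* (c • B) = c • (w ᵥ* B) := by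
  ext i
  simp [Matrix.vecMul, dotProduct, Finset.mul_sum, mul_left_comm]

lemma vecMul_vecMulVec {m : ℕ} (w a b : Fin m → ℝ) :
    w ᵥ* Matrix.vecMulVec a b = (w ⬝ᵥ a) • b := by
  ext k
  simp [Matrix.vecMulVec, Matrix.vecMul, dotProduct, Finset.sum_mul, mul_assoc]

/-- `B ↦ w ᵥ* B` as a linear map. -/
def vmL {m : ℕ} (w : Fin m → ℝ) : Matrix (Fin m) (Fin m) ℝ →ₗ[ℝ] (Fin m → ℝ) where
  toFun := fun B => w ᵥ* B
  map_add' := fun B C => Matrix.vecMul_add B C w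
  map_smul' := fun c B => vecMul_smul_matrix w c B

open NormedSpace in
lemma vecMul_exp_eigen {m : ℕ} (A : Matrix (Fin m) (Fin m) ℝ)
    (w : Fin m → ℝ) (μ : ℝ) (h : w ᵥ* A = μ • w) :
    w ᵥ* (exp A) = Real.exp μ • w := by
  have hpow : ∀ k : ℕ, w ᵥ* (A ^ k) = μ ^ k • w := by
    intro k
    induction k with
    | zero => simp
    | succ k ih =>
      rw [pow_succ, ← Matrix.vecMul_vecMul, ih, Matrix.smul_vecMul, h, smul_smul, pow_succ]
  let L := (vmL w).toContinuousLinearMap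
  have hsum : Summable fun k : ℕ => (Nat.factorial k : ℝ)⁻¹ • A ^ k :=
    NormedSpace.expSeries_summable' (𝕂 := ℝ) A
  have key : w ᵥ* (exp A) = ∑' k : ℕ, (Nat.factorial k : ℝ)⁻¹ • (μ ^ k • w) := by
    rw [NormedSpace.exp_eq_tsum ℝ]
    have h0 : w ᵥ* (∑' k : ℕ, (Nat.factorial k : ℝ)⁻¹ • A ^ k)
        = L (∑' k : ℕ, (Nat.factorial k : ℝ)⁻¹ • A ^ k) := by
      simp [L, vmL]
    rw [h0, L.map_tsum hsum]
    congr 1; funext k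
    show (vmL w) _ = _
    rw [LinearMap.map_smul]
    show (Nat.factorial k : ℝ)⁻¹ • (w ᵥ* A ^ k) = _
    rw [hpow]
  rw [key]
  have hre : Real.exp μ = ∑' k : ℕ, (Nat.factorial k : ℝ)⁻¹ • μ ^ k := by
    rw [Real.exp_eq_exp_ℝ, NormedSpace.exp_eq_tsum ℝ]
  rw [hre]
  have hs : Summable fun k : ℕ => (Nat.factorial k : ℝ)⁻¹ • μ ^ k :=
    NormedSpace.expSeries_summable' (𝕂 := ℝ) μ
  rw [← hs.tsum_smul_const]
  congr 1; funext k; rw [smul_assoc]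

theorem stmt14 {n : ℕ} (M : Matrix (Fin (n + 1)) (Fin (n + 1)) ℝ)
    (u v : Fin (n + 1) → (Fin (n + 1) → ℝ)) (lam : Fin (n + 1) → ℝ)
    (hdecomp : M = ∑ i, lam i • Matrix.vecMulVec (u i) (v i))
    (hbiorth : ∀ i j, v i ⬝ᵥ u j = if i = j then (1 : ℝ) else 0)
    (hlam0 : lam 0 = 0) (lam₂ : ℝ) (hlam₂pos : 0 < lam₂)
    (hlam₂ : ∀ i, i ≠ 0 → lam₂ ≤ lam i)
    (τ : ℝ) (hτ : 0 < τ) :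
    ∃ C > 0, ∀ (x₀ : Fin (n + 1) → ℝ) (t : ℝ), 0 ≤ t →
      ‖∑ i ∈ Finset.univ \ {0},
          (v i ⬝ᵥ ((NormedSpace.exp (-(t / τ) • M)) *ᵥ x₀)) • u i‖ ≤
        C * Real.exp (-(t / τ) * lam₂) * ‖x₀‖ := by
  -- left eigenvector property
  have heig : ∀ i, v i ᵥ* M = lam i • v i := by
    intro i
    have h0 : v i ᵥ* M = (vmL (v i)) M := by simp [vmL]
    rw [h0, hdecomp, map_sum]
    have hterm : ∀ j, (vmL (v i)) (lam j • Matrix.vecMulVec (u j) (v j))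
        = (if i = j then lam j • v j else 0) := by
      intro j
      rw [LinearMap.map_smul]
      show lam j • (v i ᵥ* Matrix.vecMulVec (u j) (v j)) = _
      rw [_root_.vecMul_vecMulVec, hbiorth i j]
      by_cases hij : i = j
      · simp [hij]
      · simp [hij]
    rw [Finset.sum_congr rfl fun j _ => hterm j]
    simp
  have hcoef : ∀ (c : ℝ) (i : Fin (n + 1)) (x₀ : Fin (n + 1) → ℝ),
      v i ⬝ᵥ ((NormedSpace.exp (c • M)) *ᵥ x₀)
        = Real.exp (c * lam i) * (v i ⬝ᵥ x₀) := by
    intro c i x₀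
    have h1 : v i ᵥ* (c • M) = (c * lam i) • v i := by
      rw [vecMul_smul_matrix, heig, smul_smul]
    have h2 := vecMul_exp_eigen (c • M) (v i) (c * lam i) h1
    rw [Matrix.dotProduct_mulVec, h2, smul_dotProduct, smul_eq_mul]
  -- the constant
  set C : ℝ := (∑ i ∈ Finset.univ \ {0}, (∑ j, |v i j|) * ‖u i‖) + 1 with hC
  have hCpos : 0 < C := by
    have : (0:ℝ) ≤ ∑ i ∈ Finset.univ \ {0}, (∑ j, |v i j|) * ‖u i‖ :=
      Finset.sum_nonneg fun i _ => mul_nonneg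
        (Finset.sum_nonneg fun j _ => abs_nonneg _) (norm_nonneg _)
    linarith
  refine ⟨C, hCpos, fun x₀ t ht => ?_⟩
  calc ‖∑ i ∈ Finset.univ \ {0},
          (v i ⬝ᵥ ((NormedSpace.exp (-(t / τ) • M)) *ᵥ x₀)) • u i‖
      ≤ ∑ i ∈ Finset.univ \ {0},
          ‖(v i ⬝ᵥ ((NormedSpace.exp (-(t / τ) • M)) *ᵥ x₀)) • u i‖ :=
        norm_sum_le _ _
    _ ≤ ∑ i ∈ Finset.univ \ {0},
          ((∑ j, |v i j|) * ‖u i‖) * (Real.exp (-(t / τ) * lam₂) * ‖x₀‖) := by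
        apply Finset.sum_le_sum
        intro i hi
        have hi0 : i ≠ 0 := by simpa using (Finset.mem_sdiff.mp hi).2
        rw [hcoef, norm_smul]
        have hdot : |v i ⬝ᵥ x₀| ≤ (∑ j, |v i j|) * ‖x₀‖ := by
          calc |v i ⬝ᵥ x₀| ≤ ∑ j, |v i j * x₀ j| := Finset.abs_sum_le_sum_abs _ _
            _ = ∑ j, |v i j| * |x₀ j| := by simp [abs_mul]
            _ ≤ ∑ j, |v i j| * ‖x₀‖ := by
                apply Finset.sum_le_sum
                intro j _
                exact mul_le_mul_of_nonneg_left
                  (by simpa using norm_le_pi_norm x₀ j) (abs_nonneg _)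
            _ = (∑ j, |v i j|) * ‖x₀‖ := by rw [← Finset.sum_mul]
        have hexp : Real.exp (-(t / τ) * lam i) ≤ Real.exp (-(t / τ) * lam₂) := by
          apply Real.exp_le_exp.mpr
          have h1 : 0 ≤ t / τ := div_nonneg ht hτ.le
          nlinarith [hlam₂ i hi0]
        have hre : ‖Real.exp (-(t / τ) * lam i) * (v i ⬝ᵥ x₀)‖
            = Real.exp (-(t / τ) * lam i) * |v i ⬝ᵥ x₀| := by
          rw [Real.norm_eq_abs, abs_mul, abs_of_pos (Real.exp_pos _)]
        rw [hre]
        calc Real.exp (-(t / τ) * lam i) * |v i ⬝ᵥ x₀| * ‖u i‖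
            ≤ Real.exp (-(t / τ) * lam₂) * ((∑ j, |v i j|) * ‖x₀‖) * ‖u i‖ := by
              apply mul_le_mul_of_nonneg_right _ (norm_nonneg _)
              exact mul_le_mul hexp hdot (abs_nonneg _) (Real.exp_pos _).le
          _ = ((∑ j, |v i j|) * ‖u i‖) * (Real.exp (-(t / τ) * lam₂) * ‖x₀‖) := by
              ring
    _ = (∑ i ∈ Finset.univ \ {0}, (∑ j, |v i j|) * ‖u i‖)
          * (Real.exp (-(t / τ) * lam₂) * ‖x₀‖) := by
        rw [← Finset.sum_mul]
    _ ≤ C * Real.exp (-(t / τ) * lam₂) * ‖x₀‖ := by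
        rw [mul_assoc]
        apply mul_le_mul_of_nonneg_right _ (mul_nonneg (Real.exp_pos _).le (norm_nonneg _))
        simp [hC]
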